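/- For every m ≥ 1, the maximal order of an abelian subgroup of the symmetric group S_m is at most 3^(m/3), i.e., a(S_m)^3 ≤ 3^m. -/

import Mathlib

/-- `maxAb G` is the maximal order of an abelian subgroup of `G`. -/
noncomputable def maxAb (G : Type*) [Group G] : ℕ :=
  sSup {n | ∃ H : Subgroup G, IsMulCommutative H ∧ Nat.card H = n}

lemma cube_le_three_pow : ∀ n : ℕ, n ^ 3 ≤ 3 ^ n := by
  intro n
  induction n with
  | zero => decide
  | succ k ih =>
    match k, ih with
    | 0, _ => decide
    | 1, _ => decide
    | 2, _ => decide
    | (j+3), ih =>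
      calc (j + 3 + 1) ^ 3 ≤ 3 * (j + 3) ^ 3 := by nlinarith [j.zero_le, sq_nonneg j, pow_pos (Nat.succ_pos 2)]
        _ ≤ 3 * 3 ^ (j + 3) := by omega
        _ = 3 ^ (j + 3 + 1) := by ring

lemma natCard_sigma {ι : Type*} [Fintype ι] (f : ι → Type*) [∀ i, Finite (f i)] :
    Nat.card (Σ i, f i) = ∑ i, Nat.card (f i) := by
  classical
  haveI : ∀ i, Fintype (f i) := fun i => Fintype.ofFinite (f i)
  simp [Nat.card_eq_fintype_card, Fintype.card_sigma]

/-- key lemma: an abelian subgroup of `S_m` has `|H|^3 ≤ 3^m`. -/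
lemma abelian_subgroup_card_cube_le (m : ℕ) (H : Subgroup (Equiv.Perm (Fin m)))
    (hH : IsMulCommutative H) : (Nat.card H) ^ 3 ≤ 3 ^ m := by
  classical
  haveI := hH
  set Ω := MulAction.orbitRel.Quotient H (Fin m)
  haveI : Fintype Ω := Fintype.ofFinite Ω
  -- the injection from H to the product of orbits
  have hinj : Function.Injective
      (fun (h : H) (ω : Ω) => (⟨h • ω.out, MulAction.mem_orbit _ h⟩ :
        MulAction.orbit H (ω.out : Fin m))) := by
    intro g h hgh
    have key : ∀ x : Fin m, (g : Equiv.Perm (Fin m)) x = (h : Equiv.Perm (Fin m)) x := by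
      intro x
      set ω : Ω := ⟦x⟧
      have hx : x ∈ MulAction.orbit H (ω.out : Fin m) := by
        have := MulAction.orbitRel.Quotient.orbit_eq_orbit_out ω Quotient.out_eq'
        have hmem : x ∈ (ω : Ω).orbit := by
          rw [MulAction.orbitRel.Quotient.mem_orbit]
        rwa [this] at hmem
      obtain ⟨k, hk⟩ := hx
      have hgo : g • (ω.out : Fin m) = h • (ω.out : Fin m) := by
        have := congrFun hgh ω
        exact Subtype.ext_iff.mp this
      have : g • x = h • x := by
        rw [← hk, smul_smul, smul_smul, (by exact hH.is_comm.comm g k : g * k = k * g), (by exact hH.is_comm.comm h k : h * k = k * h), ← smul_smul, ← smul_smul,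
          hgo]
      exact this
    exact Subtype.ext (Equiv.ext key)
  have hcard : Nat.card H ≤ ∏ ω : Ω, Nat.card (MulAction.orbit H (ω.out : Fin m)) := by
    rw [← Nat.card_pi]
    exact Nat.card_le_card_of_injective _ hinj
  have hsum : ∑ ω : Ω, Nat.card (MulAction.orbit H (ω.out : Fin m)) = m := by
    rw [← natCard_sigma, ← Nat.card_congr (MulAction.selfEquivSigmaOrbits H (Fin m)),
      Nat.card_eq_fintype_card, Fintype.card_fin]
  calc (Nat.card H) ^ 3 ≤ (∏ ω : Ω, Nat.card (MulAction.orbit H (ω.out : Fin m))) ^ 3 :=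
        Nat.pow_le_pow_left hcard 3
    _ = ∏ ω : Ω, (Nat.card (MulAction.orbit H (ω.out : Fin m))) ^ 3 := by
        rw [Finset.prod_pow]
    _ ≤ ∏ ω : Ω, 3 ^ (Nat.card (MulAction.orbit H (ω.out : Fin m))) :=
        Finset.prod_le_prod (fun _ _ => Nat.zero_le _) (fun ω _ => cube_le_three_pow _)
    _ = 3 ^ (∑ ω : Ω, Nat.card (MulAction.orbit H (ω.out : Fin m))) :=
        Finset.prod_pow_eq_pow_sum _ _ _
    _ = 3 ^ m := by rw [hsum]

/-- The maximal order of an abelian subgroup of `S_m` is at most `3^(m/3)`,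
i.e. `a(S_m)^3 ≤ 3^m`. -/
theorem maxAb_symm_le (m : ℕ) (hm : 1 ≤ m) :
    (maxAb (Equiv.Perm (Fin m))) ^ 3 ≤ 3 ^ m := by
  classical
  set S := {n | ∃ H : Subgroup (Equiv.Perm (Fin m)), IsMulCommutative H ∧ Nat.card H = n} with hS
  have hne : S.Nonempty := ⟨1, ⊥, ⟨⟨fun a b => by
    have ha := a.2; have hb := b.2
    simp only [Subgroup.mem_bot] at ha hb
    ext; simp [ha, hb]⟩⟩, by simp⟩
  have hbdd : BddAbove S := by
    refine ⟨Nat.card (Equiv.Perm (Fin m)), ?_⟩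
    rintro n ⟨H, _, rfl⟩
    exact Nat.card_le_card_of_injective _ Subtype.val_injective
  obtain ⟨H, hcomm, hcard⟩ := Nat.sSup_mem hne hbdd
  rw [maxAb, ← hS, ← hcard]
  exact abelian_subgroup_card_cube_le m H hcomm
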